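/- Let N be an l×n integer matrix with non-negative entries and columns b_1,...,b_n, let M be an m×n integer matrix with ker_Z(N) ⊆ ker_Z(M), and let φ: K[x_1,...,x_n] → K[t_1,...,t_l] be the K-algebra map with φ(x_i) = t^{b_i}. Let N(ker_Z(M)) be the lattice {u_1 b_1 + ... + u_n b_n : u ∈ ker_Z(M)} ⊆ Z^l. Then the lattice ideal I_{N(ker_Z(M))} in K[t_1,...,t_l] equals the saturation (φ(I_M)K[t_1,...,t_l]) : (t_1⋯t_l)^∞ of the extension of φ(I_M). -/

import Mathlib

open scoped Classical


open MvPolynomial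

/-- The integer kernel of an integer matrix. -/
def kerZ {m n : ℕ} (M : Matrix (Fin m) (Fin n) ℤ) : Set (Fin n → ℤ) :=
  {u | M.mulVec u = 0}

/-- The binomial `t^{z₊} - t^{z₋}` associated to an integer vector `z`. -/
noncomputable def binom {n : ℕ} (K : Type*) [Field K] (u : Fin n → ℤ) :
    MvPolynomial (Fin n) K :=
  monomial (Finsupp.equivFunOnFinite.symm fun i => (u i).toNat) 1 -
    monomial (Finsupp.equivFunOnFinite.symm fun i => (-u i).toNat) 1

/-- The toric ideal of an integer matrix. -/
noncomputable def toricIdeal (K : Type*) [Field K] {m n : ℕ}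
    (M : Matrix (Fin m) (Fin n) ℤ) : Ideal (MvPolynomial (Fin n) K) :=
  Ideal.span (binom K '' kerZ M)

/-- The lattice ideal of a set `L ⊆ ℤˡ`: generated by the binomials
`t^{z₊} - t^{z₋}` for `z ∈ L`. -/
noncomputable def latticeIdeal (K : Type*) [Field K] {l : ℕ}
    (L : Set (Fin l → ℤ)) : Ideal (MvPolynomial (Fin l) K) :=
  Ideal.span (binom K '' L)

/-- The saturation `J : f^∞ = {g | f^k * g ∈ J for some k}`. -/
def satPow {R : Type*} [CommRing R] (J : Ideal R) (f : R) : Ideal R where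
  carrier := {g | ∃ k : ℕ, f ^ k * g ∈ J}
  zero_mem' := ⟨0, by simp⟩
  add_mem' := by
    rintro a b ⟨k, hk⟩ ⟨j, hj⟩
    refine ⟨k + j, ?_⟩
    have : f ^ (k + j) * (a + b) = f ^ j * (f ^ k * a) + f ^ k * (f ^ j * b) := by ring
    rw [this]
    exact add_mem (J.mul_mem_left _ hk) (J.mul_mem_left _ hj)
  smul_mem' := by
    rintro c a ⟨k, hk⟩
    refine ⟨k, ?_⟩
    have : f ^ k * (c • a) = c * (f ^ k * a) := by rw [smul_eq_mul]; ring
    rw [this]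
    exact J.mul_mem_left _ hk

open scoped Classical

namespace Stmt4Aux
variable (K : Type*) [Field K] {l : ℕ}

noncomputable def toQuot (L : AddSubgroup (Fin l → ℤ)) : (Fin l →₀ ℕ) →+ (Fin l → ℤ) ⧸ L :=
  AddMonoidHom.mk' (fun d => QuotientAddGroup.mk (fun i => (d i : ℤ)))
    (fun a b => by
      have : (fun i => ((a + b) i : ℤ)) = (fun i => (a i : ℤ)) + fun i => (b i : ℤ) := by
        funext i; simp
      show QuotientAddGroup.mk _ = QuotientAddGroup.mk _ + QuotientAddGroup.mk _
      rw [this, QuotientAddGroup.mk_add])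

noncomputable def psiHom (L : AddSubgroup (Fin l → ℤ)) :
    MvPolynomial (Fin l) K →+* AddMonoidAlgebra K ((Fin l → ℤ) ⧸ L) :=
  AddMonoidAlgebra.mapDomainRingHom K (toQuot L)

lemma psiHom_apply (L : AddSubgroup (Fin l → ℤ)) (p : MvPolynomial (Fin l) K) :
    (psiHom K L p).coeff = Finsupp.mapDomain (toQuot L) (AddMonoidAlgebra.coeff p) := rfl

lemma psiHom_monomial (L : AddSubgroup (Fin l → ℤ)) (d : Fin l →₀ ℕ) (c : K) :
    psiHom K L (monomial d c) = AddMonoidAlgebra.single (toQuot L d) c := by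
  rw [← MvPolynomial.single_eq_monomial, psiHom, AddMonoidAlgebra.mapDomainRingHom_apply,
    AddMonoidAlgebra.mapDomain_single]

lemma toQuot_apply (L : AddSubgroup (Fin l → ℤ)) (d : Fin l →₀ ℕ) :
    toQuot L d = QuotientAddGroup.mk (fun i => (d i : ℤ)) := rfl

lemma sub_monomial_mem (S : Set (Fin l → ℤ)) (a b : Fin l →₀ ℕ)
    (hab : ((fun i => (a i : ℤ)) - fun i => (b i : ℤ)) ∈ S) (c : K) :
    monomial a c - monomial b c ∈ latticeIdeal K S := by
  set z : Fin l → ℤ := (fun i => (a i : ℤ)) - fun i => (b i : ℤ) with hz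
  have hmem : binom K z ∈ latticeIdeal K S := Ideal.subset_span ⟨z, hab, rfl⟩
  set m : Fin l →₀ ℕ := Finsupp.equivFunOnFinite.symm fun i => min (a i) (b i) with hm
  have ha : m + (Finsupp.equivFunOnFinite.symm fun i => (z i).toNat) = a := by
    ext i
    have hzi : z i = (a i : ℤ) - b i := by rw [hz]; simp
    simp only [hm, Finsupp.add_apply, Finsupp.equivFunOnFinite_symm_apply_apply, hzi]
    omega
  have hb : m + (Finsupp.equivFunOnFinite.symm fun i => (-z i).toNat) = b := by
    ext i
    have hzi : z i = (a i : ℤ) - b i := by rw [hz]; simp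
    simp only [hm, Finsupp.add_apply, Finsupp.equivFunOnFinite_symm_apply_apply, hzi]
    omega
  have key : monomial a c - monomial b c = monomial m c * binom K z := by
    rw [binom, mul_sub, monomial_mul, monomial_mul, mul_one, ha, hb]
  rw [key]
  exact Ideal.mul_mem_left _ _ hmem

lemma coeff_sum_eq_zero (L : AddSubgroup (Fin l → ℤ)) (p : MvPolynomial (Fin l) K)
    (hp : psiHom K L p = 0) (g : (Fin l → ℤ) ⧸ L) :
    ∑ b ∈ p.support, (if toQuot L b = g then coeff b p else 0) = 0 := by
  have h0 : (Finsupp.mapDomain (toQuot L) (AddMonoidAlgebra.coeff p)) g = 0 := by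
    rw [← psiHom_apply, hp]; rfl
  rw [Finsupp.mapDomain, Finsupp.sum_apply, Finsupp.sum] at h0
  have : ∑ b ∈ p.support, (if toQuot L b = g then coeff b p else 0)
      = ∑ a ∈ p.support, (Finsupp.single (toQuot L a) (coeff a p)) g :=
    Finset.sum_congr rfl fun b _ => by rw [Finsupp.single_apply]
  rw [this]
  exact h0

end Stmt4Aux

namespace Stmt4Aux
variable (K : Type*) [Field K] {l : ℕ}

lemma ker_le_latticeIdeal (L : AddSubgroup (Fin l → ℤ)) (p : MvPolynomial (Fin l) K)
    (hp : psiHom K L p = 0) : p ∈ latticeIdeal K (L : Set (Fin l → ℤ)) := by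
  generalize hc : p.support.card = cnum
  induction cnum using Nat.strong_induction_on generalizing p with
  | _ cnum ih =>
  rcases eq_or_ne p 0 with rfl | hne
  · exact zero_mem _
  obtain ⟨a, ha⟩ : p.support.Nonempty := MvPolynomial.support_nonempty.mpr hne
  have hca : coeff a p ≠ 0 := MvPolynomial.mem_support_iff.mp ha
  -- find another monomial b with the same image
  have hsum := coeff_sum_eq_zero K L p hp (toQuot L a)
  have hex : ∃ b ∈ p.support, b ≠ a ∧ toQuot L b = toQuot L a := by
    by_contra hno
    push_neg at hno
    have : ∑ b ∈ p.support, (if toQuot L b = toQuot L a then coeff b p else 0)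
        = coeff a p := by
      rw [Finset.sum_eq_single a]
      · simp
      · intro b hb hba
        rcases eq_or_ne (toQuot L b) (toQuot L a) with he | he
        · exact absurd he (hno b hb hba)
        · simp [he]
      · intro habs; exact absurd ha habs
    rw [this] at hsum
    exact hca hsum
  obtain ⟨b, hb, hba, hquot⟩ := hex
  set c : K := coeff a p with hcdef
  set q : MvPolynomial (Fin l) K := p - (monomial a c - monomial b c) with hqdef
  have hqcoeff : ∀ d, coeff d q = coeff d p - (if a = d then c else 0) + (if b = d then c else 0) := by
    intro d
    rw [hqdef]
    rw [MvPolynomial.coeff_sub, MvPolynomial.coeff_sub, MvPolynomial.coeff_monomial,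
      MvPolynomial.coeff_monomial]
    ring
  have hqa : coeff a q = 0 := by
    rw [hqcoeff a, if_pos rfl, if_neg hba]
    simp [hcdef]
  have hsupp : q.support ⊆ p.support.erase a := by
    intro d hd
    have hdq : coeff d q ≠ 0 := MvPolynomial.mem_support_iff.mp hd
    rcases eq_or_ne d a with rfl | hda
    · exact absurd hqa hdq
    rw [Finset.mem_erase]
    refine ⟨hda, MvPolynomial.mem_support_iff.mpr ?_⟩
    intro hpd
    rcases eq_or_ne b d with rfl | hbd
    · exact (MvPolynomial.mem_support_iff.mp hb) hpd
    · exact hdq (by rw [hqcoeff d, hpd, if_neg (fun h => hda h.symm), if_neg hbd]; ring)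
  have hcard : q.support.card < cnum := by
    calc q.support.card ≤ (p.support.erase a).card := Finset.card_le_card hsupp
    _ < p.support.card := Finset.card_erase_lt_of_mem ha
    _ = cnum := hc
  have hbinmem : monomial a c - monomial b c ∈ latticeIdeal K (L : Set (Fin l → ℤ)) := by
    apply sub_monomial_mem
    have := hquot
    rw [toQuot_apply, toQuot_apply, QuotientAddGroup.eq_iff_sub_mem] at this
    -- this : (fun i => (b i:ℤ)) - (fun i => (a i:ℤ)) ∈ L
    have hmem : ((fun i => (a i : ℤ)) - fun i => (b i : ℤ)) ∈ L := by
      have := neg_mem this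
      rwa [neg_sub] at this
    exact hmem
  have hqker : psiHom K L q = 0 := by
    rw [hqdef, map_sub, map_sub, hp, psiHom_monomial, psiHom_monomial, hquot]
    simp
  have hq : q ∈ latticeIdeal K (L : Set (Fin l → ℤ)) := ih _ hcard q hqker rfl
  have : p = q + (monomial a c - monomial b c) := by rw [hqdef]; ring
  rw [this]
  exact add_mem hq hbinmem

lemma latticeIdeal_eq_ker (L : AddSubgroup (Fin l → ℤ)) :
    latticeIdeal K (L : Set (Fin l → ℤ)) = RingHom.ker (psiHom K L) := by
  refine le_antisymm ?_ (fun p hp => ker_le_latticeIdeal K L p hp)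
  rw [latticeIdeal, Ideal.span_le]
  rintro _ ⟨z, hz, rfl⟩
  simp only [SetLike.mem_coe, RingHom.mem_ker, binom, map_sub, psiHom_monomial]
  have : toQuot L (Finsupp.equivFunOnFinite.symm fun i => (z i).toNat)
      = toQuot L (Finsupp.equivFunOnFinite.symm fun i => (-z i).toNat) := by
    rw [toQuot_apply, toQuot_apply, QuotientAddGroup.eq_iff_sub_mem]
    have hfun : ((fun i => (((Finsupp.equivFunOnFinite.symm fun i => (z i).toNat) : Fin l →₀ ℕ) i : ℤ))
        - fun i => (((Finsupp.equivFunOnFinite.symm fun i => (-z i).toNat) : Fin l →₀ ℕ) i : ℤ)) = z := by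
      funext i
      simp only [Pi.sub_apply, Finsupp.equivFunOnFinite_symm_apply_apply]
      omega
    rw [hfun]
    exact hz
  rw [this, sub_self]

end Stmt4Aux

namespace Stmt4Aux
variable (K : Type*) [Field K] {l : ℕ}

lemma prod_X_pow_fun (d : Fin l → ℕ) :
    (∏ j, X j ^ d j : MvPolynomial (Fin l) K)
      = monomial (Finsupp.equivFunOnFinite.symm d) 1 := by
  rw [← MvPolynomial.prod_X_pow_eq_monomial (s := Finsupp.equivFunOnFinite.symm d)]
  refine (Finset.prod_subset (Finset.subset_univ _) ?_).symm
  intro x _ hx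
  have : d x = 0 := Finsupp.notMem_support_iff.mp hx
  rw [this, pow_zero]

lemma prod_X_pow_k (k : ℕ) :
    ((∏ j : Fin l, X j : MvPolynomial (Fin l) K)) ^ k
      = monomial (Finsupp.equivFunOnFinite.symm fun _ => k) 1 := by
  rw [← Finset.prod_pow]
  exact prod_X_pow_fun K fun _ => k

lemma single_unit {G : Type*} [AddCommGroup G] (g : G) :
    IsUnit (AddMonoidAlgebra.single g (1 : K)) := by
  refine IsUnit.of_mul_eq_one (AddMonoidAlgebra.single (-g) (1 : K)) ?_
  rw [AddMonoidAlgebra.single_mul_single]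
  simp [AddMonoidAlgebra.one_def]

lemma ker_sat (L : AddSubgroup (Fin l → ℤ)) (p : MvPolynomial (Fin l) K) (k : ℕ)
    (hp : (∏ j : Fin l, X j) ^ k * p ∈ RingHom.ker (psiHom K L)) :
    psiHom K L p = 0 := by
  rw [RingHom.mem_ker, map_mul] at hp
  rw [prod_X_pow_k, psiHom_monomial] at hp
  exact ((single_unit K _).mul_right_eq_zero).mp hp

end Stmt4Aux

namespace Stmt4Aux
variable (K : Type*) [Field K] {l n : ℕ}

lemma aeval_monomial_N (N : Matrix (Fin l) (Fin n) ℕ) (d : Fin n →₀ ℕ) (c : K) :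
    (aeval fun i : Fin n => ∏ j : Fin l, (X j : MvPolynomial (Fin l) K) ^ N j i) (monomial d c)
      = monomial (Finsupp.equivFunOnFinite.symm fun j => ∑ i, N j i * d i) c := by
  rw [MvPolynomial.aeval_monomial]
  rw [Finsupp.prod_fintype _ _ (fun i => pow_zero _)]
  have h1 : ∀ i : Fin n,
      (∏ j : Fin l, (X j : MvPolynomial (Fin l) K) ^ N j i) ^ d i
        = ∏ j, X j ^ (N j i * d i) := by
    intro i
    rw [← Finset.prod_pow]
    exact Finset.prod_congr rfl fun j _ => by rw [← pow_mul]
  simp_rw [h1]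
  rw [Finset.prod_comm]
  simp_rw [Finset.prod_pow_eq_pow_sum]
  rw [prod_X_pow_fun, MvPolynomial.algebraMap_eq, MvPolynomial.C_mul_monomial, mul_one]

end Stmt4Aux

open Stmt4Aux

theorem stmt4 (K : Type*) [Field K] {l m n : ℕ}
    (N : Matrix (Fin l) (Fin n) ℕ) (M : Matrix (Fin m) (Fin n) ℤ)
    (h : kerZ (N.map (Nat.cast : ℕ → ℤ)) ⊆ kerZ M)
    (φ : MvPolynomial (Fin n) K →ₐ[K] MvPolynomial (Fin l) K)
    (hφ : φ = aeval fun i : Fin n => ∏ j : Fin l, X j ^ N j i) :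
    latticeIdeal K
        {y : Fin l → ℤ | ∃ u ∈ kerZ M, y = (N.map (Nat.cast : ℕ → ℤ)).mulVec u} =
      satPow (Ideal.map φ (toricIdeal K M)) (∏ j : Fin l, X j) := by
  set Nℤ : Matrix (Fin l) (Fin n) ℤ := N.map (Nat.cast : ℕ → ℤ) with hNZ
  set kerM : AddSubgroup (Fin n → ℤ) := (LinearMap.ker (Matrix.mulVecLin M)).toAddSubgroup
    with hkerM
  set L : AddSubgroup (Fin l → ℤ) := kerM.map (Matrix.mulVecLin Nℤ).toAddMonoidHom with hL
  have hkerM_mem : ∀ u : Fin n → ℤ, u ∈ kerM ↔ M.mulVec u = 0 := by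
    intro u
    simp [hkerM, LinearMap.mem_ker, Matrix.mulVecLin_apply]
  have hLmem : ∀ y : Fin l → ℤ, y ∈ L ↔ ∃ u ∈ kerZ M, y = Nℤ.mulVec u := by
    intro y
    constructor
    · rintro ⟨u, hu, rfl⟩
      exact ⟨u, (hkerM_mem u).mp hu, by rw [LinearMap.toAddMonoidHom_coe, Matrix.mulVecLin_apply]⟩
    · rintro ⟨u, hu, rfl⟩
      exact ⟨u, (hkerM_mem u).mpr hu, by rw [LinearMap.toAddMonoidHom_coe, Matrix.mulVecLin_apply]⟩
  have hset : {y : Fin l → ℤ | ∃ u ∈ kerZ M, y = Nℤ.mulVec u} = (L : Set (Fin l → ℤ)) := by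
    ext y
    rw [SetLike.mem_coe, hLmem y]
    rfl
  rw [hset, latticeIdeal_eq_ker K L]
  -- key computation: ψ ∘ φ kills binomials of ker M
  have hNapp : ∀ (j : Fin l) (i : Fin n), Nℤ j i = (N j i : ℤ) := by
    intro j i; rw [hNZ, Matrix.map_apply]
  have hmulVec : ∀ (u : Fin n → ℤ) (j : Fin l), Nℤ.mulVec u j = ∑ i, (N j i : ℤ) * u i := by
    intro u j
    simp [Matrix.mulVec, dotProduct, hNapp]
  apply le_antisymm
  · -- ker ψ = latticeIdeal ≤ satPow
    rw [← latticeIdeal_eq_ker K L, latticeIdeal, Ideal.span_le]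
    rintro _ ⟨z, hz, rfl⟩
    obtain ⟨u, hu, rfl⟩ := (hLmem z).mp hz
    set A : Fin l → ℕ := fun j => ∑ i, N j i * (u i).toNat with hA
    set B : Fin l → ℕ := fun j => ∑ i, N j i * (-u i).toNat with hB
    have hAB : ∀ j, (A j : ℤ) - B j = Nℤ.mulVec u j := by
      intro j
      rw [hmulVec u j, hA, hB]
      push_cast
      rw [← Finset.sum_sub_distrib]
      refine Finset.sum_congr rfl fun i _ => ?_
      rw [← mul_sub]
      congr 1
      omega
    set cm : Fin l → ℕ := fun j => min (A j) (B j) with hcm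
    set k : ℕ := ∑ j, cm j with hk
    have hck : ∀ j, cm j ≤ k :=
      fun j => Finset.single_le_sum (fun _ _ => Nat.zero_le _) (Finset.mem_univ j)
    refine SetLike.mem_coe.mpr ⟨k, ?_⟩
    set e : Fin l →₀ ℕ := Finsupp.equivFunOnFinite.symm fun j => k - cm j with he
    have hphib : φ (binom K u) =
        monomial (Finsupp.equivFunOnFinite.symm A) 1
          - monomial (Finsupp.equivFunOnFinite.symm B) 1 := by
      rw [binom, map_sub, hφ, aeval_monomial_N, aeval_monomial_N]
      rfl
    have hE : (∏ j : Fin l, (X j : MvPolynomial (Fin l) K)) ^ k * binom K (Nℤ.mulVec u)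
        = monomial e 1 * φ (binom K u) := by
      have hEq1 : (Finsupp.equivFunOnFinite.symm fun _ : Fin l => k)
            + (Finsupp.equivFunOnFinite.symm fun j => (Nℤ.mulVec u j).toNat)
          = e + Finsupp.equivFunOnFinite.symm A := by
        ext j
        have h1 := hAB j
        have h2 := hck j
        have h3 : cm j = min (A j) (B j) := rfl
        simp only [Finsupp.add_apply, Finsupp.equivFunOnFinite_symm_apply_apply, he]
        omega
      have hEq2 : (Finsupp.equivFunOnFinite.symm fun _ : Fin l => k)
            + (Finsupp.equivFunOnFinite.symm fun j => (-(Nℤ.mulVec u j)).toNat)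
          = e + Finsupp.equivFunOnFinite.symm B := by
        ext j
        have h1 := hAB j
        have h2 := hck j
        have h3 : cm j = min (A j) (B j) := rfl
        simp only [Finsupp.add_apply, Finsupp.equivFunOnFinite_symm_apply_apply, he]
        omega
      rw [hphib, prod_X_pow_k, binom, mul_sub, mul_sub, monomial_mul, monomial_mul,
        monomial_mul, monomial_mul, mul_one, hEq1, hEq2]
    rw [hE]
    refine Ideal.mul_mem_left _ _ (Ideal.mem_map_of_mem φ ?_)
    exact Ideal.subset_span ⟨u, hu, rfl⟩
  · -- satPow ≤ ker ψ
    intro p hp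
    obtain ⟨k, hk⟩ := hp
    have hmap : Ideal.map φ (toricIdeal K M) ≤ RingHom.ker (psiHom K L) := by
      rw [Ideal.map_le_iff_le_comap, toricIdeal, Ideal.span_le]
      rintro _ ⟨u, hu, rfl⟩
      rw [SetLike.mem_coe, Ideal.mem_comap, RingHom.mem_ker]
      rw [binom, map_sub, hφ, aeval_monomial_N, aeval_monomial_N, map_sub,
        psiHom_monomial, psiHom_monomial]
      simp only [Finsupp.equivFunOnFinite_symm_apply_apply]
      have : toQuot L (Finsupp.equivFunOnFinite.symm fun j => ∑ i, N j i * ((u i).toNat))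
          = toQuot L (Finsupp.equivFunOnFinite.symm fun j => ∑ i, N j i * ((-u i).toNat)) := by
        rw [toQuot_apply, toQuot_apply, QuotientAddGroup.eq_iff_sub_mem]
        have hfun : ((fun j => (((Finsupp.equivFunOnFinite.symm fun j => ∑ i, N j i * ((u i).toNat) : Fin l →₀ ℕ)) j : ℤ))
            - fun j => (((Finsupp.equivFunOnFinite.symm fun j => ∑ i, N j i * ((-u i).toNat) : Fin l →₀ ℕ)) j : ℤ))
            = Nℤ.mulVec u := by
          funext j
          simp only [Pi.sub_apply, Finsupp.equivFunOnFinite_symm_apply_apply]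
          rw [hmulVec u j]
          push_cast
          rw [← Finset.sum_sub_distrib]
          refine Finset.sum_congr rfl fun i _ => ?_
          rw [← mul_sub]
          congr 1
          omega
        rw [hfun]
        exact (hLmem _).mpr ⟨u, hu, rfl⟩
      rw [this, sub_self]
    have := ker_sat K L p k (hmap hk)
    exact RingHom.mem_ker.mpr this
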